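/- Let d ≥ 1, T > 0, and let p, q > 2 satisfy d/p + 2/q < 1. Then there exists a constant C > 0, depending only on T, d, p, q, such that for every Borel measurable f : [0,T] × ℝ^d → ℝ^d with ‖f‖_{L^q_p} < ∞ one has sup_{x ∈ ℝ^d} ∫_0^T (2πs)^{−d/2} ∫_{ℝ^d} |f(s,z)|^2 e^{−|z−x|^2/(2s)} dz ds ≤ C · ‖f‖_{L^q_p}^2; equivalently, if (B_t) is a d-dimensional Brownian motion, then sup_{x ∈ ℝ^d} E[ ∫_0^T |f(s, x + B_s)|^2 ds ] ≤ C · ‖f‖_{L^q_p}^2. -/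

import Mathlib

open MeasureTheory ProbabilityTheory Filter
open scoped ENNReal NNReal Topology

noncomputable section

/-- `Euc d` is `ℝ^d` with the Euclidean norm. -/
abbrev Euc (d : ℕ) := EuclideanSpace ℝ (Fin d)

/-- `B` is a `d`-dimensional Brownian motion on `[0,T]` with respect to `μ`:
continuous paths, `B 0 = 0`, and for any monotone family of times in `[0,T]` the
coordinates of the increments are independent, each increment coordinate being
a centered Gaussian of variance `t - s`. -/
def IsBrownianMotion {Ω : Type*} [MeasurableSpace Ω] (μ : Measure Ω) (d : ℕ) (T : ℝ)
    (B : ℝ → Ω → Euc d) : Prop :=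
  (∀ ω, ContinuousOn (fun t => B t ω) (Set.Icc 0 T)) ∧
  (∀ ω, B 0 ω = 0) ∧
  (∀ t, Measurable (B t)) ∧
  (∀ (n : ℕ) (t : Fin (n + 1) → ℝ), Monotone t → (∀ i, t i ∈ Set.Icc (0 : ℝ) T) →
    iIndepFun
      (fun p : Fin n × Fin d => fun ω =>
        (B (t p.1.succ) ω - B (t p.1.castSucc) ω) p.2) μ) ∧
  (∀ s t : ℝ, 0 ≤ s → s ≤ t → t ≤ T → ∀ i : Fin d,
    μ.map (fun ω => (B t ω - B s ω) i) = gaussianReal 0 (Real.toNNReal (t - s)))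

/-- The mixed norm `‖f‖_{L^q_p}` (as an extended nonnegative real). -/
def mixedNorm (d : ℕ) (T p q : ℝ) (f : ℝ → Euc d → Euc d) : ℝ≥0∞ :=
  (∫⁻ t in Set.Ioc (0 : ℝ) T,
      (∫⁻ x : Euc d, ENNReal.ofReal (‖f t x‖ ^ p)) ^ (q / p)) ^ (1 / q)

/-- The `μ`-augmented natural filtration of `B` at time `t`. -/
def augFiltration {Ω : Type*} [MeasurableSpace Ω] (μ : Measure Ω) {d : ℕ}
    (B : ℝ → Ω → Euc d) (t : ℝ) : MeasurableSpace Ω :=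
  (⨆ s ∈ Set.Icc (0 : ℝ) t, MeasurableSpace.comap (B s) inferInstance) ⊔
    MeasurableSpace.generateFrom {N : Set Ω | μ N = 0}

/-- `X` is a strong solution of `dX_t = b(t, X_t) dt + dB_t`, `X_0 = x`, on `[0,T]`:
a continuous process, adapted to the `μ`-augmented natural filtration of `B`, such that
a.s. `∫_0^T |b(s,X_s)| ds < ∞` and `X_t = x + ∫_0^t b(s,X_s) ds + B_t` for all `t ∈ [0,T]`. -/
def IsStrongSolution {Ω : Type*} [MeasurableSpace Ω] (μ : Measure Ω) {d : ℕ} (T : ℝ)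
    (B : ℝ → Ω → Euc d) (b : ℝ → Euc d → Euc d) (x : Euc d) (X : ℝ → Ω → Euc d) : Prop :=
  (∀ ω, ContinuousOn (fun t => X t ω) (Set.Icc 0 T)) ∧
  (∀ t ∈ Set.Icc (0 : ℝ) T, Measurable[augFiltration μ B t] (X t)) ∧
  (∀ᵐ ω ∂μ, IntegrableOn (fun s => b s (X s ω)) (Set.Icc 0 T) ∧
    ∀ t ∈ Set.Icc (0 : ℝ) T,
      X t ω = x + (∫ s in Set.Icc (0 : ℝ) t, b s (X s ω)) + B t ω)

open Real Set

lemma gauss_integrable (d : ℕ) {b : ℝ} (hb : 0 < b) :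
    Integrable (fun v : Euc d => Real.exp (-b * ‖v‖ ^ 2)) := by
  have h := (GaussianFourier.integrable_cexp_neg_mul_sq_norm_add (V := Euc d) (b := (b : ℂ))
    (by simpa using hb) 0 0).norm
  refine h.congr (Filter.Eventually.of_forall fun v => ?_)
  simp only [Complex.norm_exp]
  norm_num [← Complex.ofReal_pow, ← Complex.ofReal_mul, ← Complex.ofReal_neg]

lemma gauss_lintegral (d : ℕ) {b : ℝ} (hb : 0 < b) (x : Euc d) :
    ∫⁻ z : Euc d, ENNReal.ofReal (Real.exp (-b * ‖z - x‖ ^ 2)) =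
      ENNReal.ofReal ((Real.pi / b) ^ ((d : ℝ) / 2)) := by
  have hmeas : Measurable fun w : Euc d => ENNReal.ofReal (Real.exp (-b * ‖w‖ ^ 2)) :=
    (((measurable_norm.pow_const 2).const_mul (-b)).exp).ennreal_ofReal
  calc ∫⁻ z : Euc d, ENNReal.ofReal (Real.exp (-b * ‖z - x‖ ^ 2))
      = ∫⁻ z : Euc d, ENNReal.ofReal (Real.exp (-b * ‖z‖ ^ 2)) :=
        (measurePreserving_sub_right volume x).lintegral_comp hmeas
    _ = ENNReal.ofReal (∫ z : Euc d, Real.exp (-b * ‖z‖ ^ 2)) :=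
        (ofReal_integral_eq_lintegral_ofReal (gauss_integrable d hb)
          (Filter.Eventually.of_forall fun v => (Real.exp_pos _).le)).symm
    _ = _ := by
        rw [GaussianFourier.integral_rexp_neg_mul_sq_norm hb, finrank_euclideanSpace_fin]

/-- for `d/p + 2/q < 1` there is a constant `C` such that, uniformly
in `x ∈ ℝ^d`, the time-integral of `|f(s,·)|^2` against the heat kernel centred
at `x` is bounded by `C ‖f‖_{L^q_p}^2`. -/
theorem heat_kernel_uniform_L2_bound
    (d : ℕ) (hd : 1 ≤ d) (T : ℝ) (hT : 0 < T)
    (p q : ℝ) (hp : 2 < p) (hq : 2 < q) (hpq : (d : ℝ) / p + 2 / q < 1) :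
    ∃ C : ℝ, 0 < C ∧
      ∀ f : ℝ → Euc d → Euc d, Measurable (Function.uncurry f) →
        mixedNorm d T p q f < ⊤ →
        ∀ x : Euc d,
          ∫⁻ s in Set.Ioc (0 : ℝ) T, ∫⁻ z : Euc d,
              ENNReal.ofReal
                ((2 * Real.pi * s) ^ (-(d : ℝ) / 2) * ‖f s z‖ ^ 2 *
                  Real.exp (-‖z - x‖ ^ 2 / (2 * s)))
            ≤ ENNReal.ofReal C * (mixedNorm d T p q f) ^ 2 := by
  have hp0 : (0:ℝ) < p := by linarith
  have hq0 : (0:ℝ) < q := by linarith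
  have hp2 : (0:ℝ) < p - 2 := by linarith
  have hq2 : (0:ℝ) < q - 2 := by linarith
  have hp0' : p ≠ 0 := ne_of_gt hp0
  have hq0' : q ≠ 0 := ne_of_gt hq0
  set r : ℝ := p / (p - 2) with hrdef
  set q' : ℝ := q / (q - 2) with hq'def
  have hr0 : 0 < r := div_pos hp0 hp2
  have hq'0 : 0 < q' := div_pos hq0 hq2
  have hconj1 : (p/2).HolderConjugate r := by
    constructor
    · rw [hrdef, inv_div, inv_div, inv_one]; field_simp; ring
    · linarith
    · exact hr0
  have hconj2 : (q/2).HolderConjugate q' := by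
    constructor
    · rw [hq'def, inv_div, inv_div, inv_one]; field_simp; ring
    · linarith
    · exact hq'0
  set α : ℝ := (d : ℝ) / p with hαdef
  have hα0 : 0 ≤ α := by positivity
  have hβ1 : α * q' < 1 := by
    have h2q : 2 / q * q = 2 := div_mul_cancel₀ 2 hq0'
    have h := mul_lt_mul_of_pos_right hpq hq0
    rw [add_mul, h2q, one_mul] at h
    rw [hq'def, ← mul_div_assoc, div_lt_one hq2]
    calc α * q = (d:ℝ)/p*q := by rw [hαdef]
      _ < q - 2 := by linarith
  set c₁ : ℝ := (2 * π) ^ (-α) * r⁻¹ ^ ((d:ℝ)/2 * (1/r)) with hc₁def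
  have hc₁ : 0 < c₁ :=
    mul_pos (Real.rpow_pos_of_pos (by positivity) _)
      (Real.rpow_pos_of_pos (inv_pos.mpr hr0) _)
  have key : ∀ s : ℝ, 0 < s →
      (2*π*s) ^ (-(d:ℝ)/2) * ((π/(r/(2*s))) ^ ((d:ℝ)/2)) ^ (1/r) = c₁ * s ^ (-α) := by
    intro s hs
    have h2πs : (0:ℝ) < 2*π*s := by positivity
    have hπb : π/(r/(2*s)) = (2*π*s) * r⁻¹ := by field_simp
    have hre : r⁻¹ = 1 - 2/p := by
      have h := hconj1.inv_add_inv_eq_one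
      rw [inv_div] at h
      linarith
    rw [hπb, ← Real.rpow_mul (by positivity), Real.mul_rpow h2πs.le (inv_nonneg.mpr hr0.le),
      ← mul_assoc, ← Real.rpow_add h2πs]
    have hexp : -(d:ℝ)/2 + (d:ℝ)/2 * (1/r) = -α := by
      rw [one_div, hre, hαdef]; field_simp; ring
    rw [hexp, Real.mul_rpow (by positivity : (0:ℝ) ≤ 2*π) hs.le, hc₁def]
    ring
  -- the time-weight function
  set g : ℝ → ℝ≥0∞ := fun s => ENNReal.ofReal (c₁ * s ^ (-α)) with hgdef
  have hgmeas : Measurable g := ((measurable_id.pow_const (-α)).const_mul c₁).ennreal_ofReal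
  set K : ℝ≥0∞ := (∫⁻ s in Ioc (0:ℝ) T, g s ^ q') ^ (1/q') with hKdef
  have hKfin : K ≠ ⊤ := by
    have hint : IntegrableOn (fun s : ℝ => c₁ ^ q' * s ^ (-(α*q'))) (Ioo 0 T) :=
      ((intervalIntegral.integrableOn_Ioo_rpow_iff hT).mpr (by linarith)).const_mul _
    have h1 : ∫⁻ s in Ioc (0:ℝ) T, g s ^ q'
        = ∫⁻ s in Ioo (0:ℝ) T, ENNReal.ofReal (c₁ ^ q' * s ^ (-(α*q'))) := by
      rw [← Measure.restrict_congr_set Ioo_ae_eq_Ioc]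
      refine setLIntegral_congr_fun measurableSet_Ioo (fun s hs => ?_)
      rw [hgdef]
      dsimp only
      rw [ENNReal.ofReal_rpow_of_nonneg
        (mul_nonneg hc₁.le (Real.rpow_nonneg hs.1.le _)) hq'0.le]
      congr 1
      rw [Real.mul_rpow hc₁.le (Real.rpow_nonneg hs.1.le _),
        ← Real.rpow_mul hs.1.le, neg_mul]
    rw [hKdef, h1]
    exact (ENNReal.rpow_lt_top_of_nonneg (by positivity) hint.lintegral_lt_top.ne).ne
  refine ⟨K.toReal + 1, by positivity, fun f hf hffin x => ?_⟩
  have hKC : K ≤ ENNReal.ofReal (K.toReal + 1) := by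
    have h := ENNReal.ofReal_le_ofReal
      (le_add_of_nonneg_right zero_le_one : K.toReal ≤ K.toReal + 1)
    rwa [ENNReal.ofReal_toReal hKfin] at h
  set F : ℝ → ℝ≥0∞ := fun s => ∫⁻ z : Euc d, ENNReal.ofReal (‖f s z‖ ^ p) with hFdef
  have hFmeas : Measurable F :=
    Measurable.lintegral_prod_right' ((hf.norm.pow_const p).ennreal_ofReal)
  have hM : mixedNorm d T p q f = (∫⁻ s in Ioc (0:ℝ) T, F s ^ (q/p)) ^ (1/q) := rfl
  have inner_bound : ∀ s ∈ Ioc (0:ℝ) T,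
      (∫⁻ z : Euc d, ENNReal.ofReal
          ((2*π*s) ^ (-(d:ℝ)/2) * ‖f s z‖^2 * Real.exp (-‖z-x‖^2/(2*s))))
        ≤ g s * F s ^ (2/p) := by
    intro s hs
    have hs0 : 0 < s := hs.1
    have hb : 0 < r / (2*s) := div_pos hr0 (by linarith)
    have hA : (0:ℝ) ≤ (2*π*s) ^ (-(d:ℝ)/2) := Real.rpow_nonneg (by positivity) _
    have hfs : Measurable (f s) := hf.of_uncurry_left
    have hBmeas : Measurable fun z : Euc d => ENNReal.ofReal (‖f s z‖^2) :=
      (hfs.norm.pow_const 2).ennreal_ofReal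
    have hCmeas : Measurable fun z : Euc d => ENNReal.ofReal (Real.exp (-‖z-x‖^2/(2*s))) :=
      ((((measurable_id.sub_const x).norm.pow_const 2).neg.div_const (2*s)).exp).ennreal_ofReal
    have hBp : ∀ z : Euc d,
        ENNReal.ofReal (‖f s z‖^2) ^ (p/2) = ENNReal.ofReal (‖f s z‖ ^ p) := by
      intro z
      rw [ENNReal.ofReal_rpow_of_nonneg (by positivity) (by positivity : (0:ℝ) ≤ p/2)]
      congr 1
      rw [← Real.rpow_natCast ‖f s z‖ 2, ← Real.rpow_mul (norm_nonneg _)]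
      have h2 : ((2:ℕ):ℝ) * (p/2) = p := by push_cast; ring
      rw [h2]
    have hCr : ∀ z : Euc d,
        ENNReal.ofReal (Real.exp (-‖z-x‖^2/(2*s))) ^ r
          = ENNReal.ofReal (Real.exp (-(r/(2*s)) * ‖z-x‖^2)) := by
      intro z
      rw [ENNReal.ofReal_rpow_of_nonneg (Real.exp_pos _).le hr0.le, ← Real.exp_mul]
      congr 1
      ring
    calc ∫⁻ z : Euc d, ENNReal.ofReal
            ((2*π*s) ^ (-(d:ℝ)/2) * ‖f s z‖^2 * Real.exp (-‖z-x‖^2/(2*s)))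
        = ENNReal.ofReal ((2*π*s)^(-(d:ℝ)/2)) *
            ∫⁻ z : Euc d, (ENNReal.ofReal (‖f s z‖^2) *
              ENNReal.ofReal (Real.exp (-‖z-x‖^2/(2*s)))) := by
          rw [← lintegral_const_mul _ (hBmeas.mul hCmeas : Measurable fun z => _ * _)]
          congr 1 with z
          rw [ENNReal.ofReal_mul (mul_nonneg hA (by positivity)), ENNReal.ofReal_mul hA,
            mul_assoc]
      _ ≤ ENNReal.ofReal ((2*π*s)^(-(d:ℝ)/2)) *
            ((∫⁻ z : Euc d, ENNReal.ofReal (‖f s z‖^2) ^ (p/2)) ^ (1/(p/2)) *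
             (∫⁻ z : Euc d, ENNReal.ofReal (Real.exp (-‖z-x‖^2/(2*s))) ^ r) ^ (1/r)) := by
          exact mul_le_mul_right (ENNReal.lintegral_mul_le_Lp_mul_Lq volume hconj1
            hBmeas.aemeasurable hCmeas.aemeasurable) _
      _ = g s * F s ^ (2/p) := by
          simp_rw [hBp, hCr]
          rw [gauss_lintegral d hb x,
            ENNReal.ofReal_rpow_of_nonneg (Real.rpow_nonneg (by positivity) _)
              (by positivity : (0:ℝ) ≤ 1/r),
            one_div_div, hgdef]
          dsimp only
          have hFs : (∫⁻ z : Euc d, ENNReal.ofReal (‖f s z‖ ^ p)) = F s := rfl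
          rw [← key s hs0, ENNReal.ofReal_mul hA, hFs]
          ring
  calc ∫⁻ s in Ioc (0:ℝ) T, ∫⁻ z : Euc d, ENNReal.ofReal
          ((2*π*s) ^ (-(d:ℝ)/2) * ‖f s z‖^2 * Real.exp (-‖z-x‖^2/(2*s)))
      ≤ ∫⁻ s in Ioc (0:ℝ) T, g s * F s ^ (2/p) :=
        setLIntegral_mono (hgmeas.mul (hFmeas.pow_const _)) inner_bound
    _ ≤ (∫⁻ s in Ioc (0:ℝ) T, g s ^ q') ^ (1/q') *
        (∫⁻ s in Ioc (0:ℝ) T, (F s ^ (2/p)) ^ (q/2)) ^ (1/(q/2)) :=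
        ENNReal.lintegral_mul_le_Lp_mul_Lq _ hconj2.symm hgmeas.aemeasurable
          (hFmeas.pow_const _).aemeasurable
    _ = K * (mixedNorm d T p q f) ^ 2 := by
        have h1 : ∀ s : ℝ, (F s ^ (2/p)) ^ (q/2) = F s ^ (q/p) := by
          intro s
          rw [← ENNReal.rpow_mul]
          congr 1
          ring
        simp_rw [h1, one_div_div]
        congr 1
        rw [hM, ← ENNReal.rpow_natCast _ 2, ← ENNReal.rpow_mul]
        congr 1
        push_cast
        ring
    _ ≤ ENNReal.ofReal (K.toReal + 1) * (mixedNorm d T p q f) ^ 2 :=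
        mul_le_mul_left hKC _
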